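/- Let p ≥ 5 be a prime and R = 𝔽_p[x,y,z,w]/(x³+y³+z³+w³). Then R is F-pure (F-split): there exists an additive map φ : R → R with φ(1) = 1 and φ(a^p · b) = a · φ(b) for all a, b ∈ R, i.e., the Frobenius endomorphism of R splits as a map of R-modules. -/

import Mathlib

set_option maxHeartbeats 1000000


open MvPolynomial

/-- A `k`-linear map `δ : R → R` is a differential operator of order at most `n`:
order `≤ 0` means `δ (r * s) = r * δ s` for all `r s`, and order `≤ n + 1` means all
commutators `[δ, μ_r]` with multiplication operators have order `≤ n`. -/
def IsDiffOpOfOrder (k : Type*) {R : Type*} [CommRing k] [CommRing R] [Algebra k R] :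
    ℕ → (R →ₗ[k] R) → Prop
  | 0 => fun δ => ∀ r s : R, δ (r * s) = r * δ s
  | n + 1 => fun δ => ∀ r : R,
      IsDiffOpOfOrder k n (δ ∘ₗ LinearMap.mulLeft k r - LinearMap.mulLeft k r ∘ₗ δ)

/-- `δ` is homogeneous of degree `e ∈ ℤ` with respect to the grading `𝒜`: it sends
elements of degree `d` to elements of degree `d + e`, interpreted as `0` when `d + e < 0`. -/
def HomogeneousOfDegree {k R : Type*} [CommRing k] [CommRing R] [Algebra k R]
    (𝒜 : ℕ → Submodule k R) (δ : R →ₗ[k] R) (e : ℤ) : Prop :=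
  ∀ (d : ℕ), ∀ r ∈ 𝒜 d,
    (∀ m : ℕ, (m : ℤ) = (d : ℤ) + e → δ r ∈ 𝒜 m) ∧ ((d : ℤ) + e < 0 → δ r = 0)

/-- The grading induced on a quotient of a polynomial ring by a (homogeneous) ideal:
the degree-`d` piece is the image of the degree-`d` homogeneous polynomials. -/
noncomputable def quotGrade {σ : Type*} (k : Type*) [CommRing k]
    (I : Ideal (MvPolynomial σ k)) (d : ℕ) : Submodule k (MvPolynomial σ k ⧸ I) :=
  (MvPolynomial.homogeneousSubmodule σ k d).map (Ideal.Quotient.mkₐ k I).toLinearMap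

/-- `R = 𝔽_p[x,y,z,w]/(x³+y³+z³+w³)`. -/
abbrev RFermat (p : ℕ) : Type :=
  MvPolynomial (Fin 4) (ZMod p) ⧸
    (Ideal.span {X 0 ^ 3 + X 1 ^ 3 + X 2 ^ 3 + X 3 ^ 3} : Ideal (MvPolynomial (Fin 4) (ZMod p)))

namespace FermatAux

noncomputable section

variable (p : ℕ)

/-- The constant exponent vector `(p-1, p-1, p-1, p-1)`. -/
def Dvec : Fin 4 →₀ ℕ := Finsupp.equivFunOnFinite.symm (fun _ => p - 1)

lemma Dvec_apply (i : Fin 4) : Dvec p i = p - 1 := rfl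

/-- `eMap m = p • m + (p-1, p-1, p-1, p-1)`. -/
def eMap (m : Fin 4 →₀ ℕ) : Fin 4 →₀ ℕ := p • m + Dvec p

lemma eMap_apply (m : Fin 4 →₀ ℕ) (i : Fin 4) : eMap p m i = p * m i + (p - 1) := by
  simp [eMap, Dvec_apply, Finsupp.smul_apply]

lemma eMap_injective (hp : 0 < p) : Function.Injective (eMap p) := by
  intro m m' h
  ext i
  have h1 : eMap p m i = eMap p m' i := by rw [h]
  rw [eMap_apply, eMap_apply] at h1
  exact Nat.eq_of_mul_eq_mul_left hp (by omega)

/-- The `p⁻¹`-linear projection: `coeff m (PhiFun g) = coeff (p•m + (p-1)𝟙) g`. -/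
def PhiFun (hp : 0 < p) (g : MvPolynomial (Fin 4) (ZMod p)) : MvPolynomial (Fin 4) (ZMod p) :=
  AddMonoidAlgebra.ofCoeff
    (Finsupp.comapDomain (eMap p) (AddMonoidAlgebra.coeff g) ((eMap_injective p hp).injOn))

lemma coeff_PhiFun (hp : 0 < p) (g : MvPolynomial (Fin 4) (ZMod p)) (m : Fin 4 →₀ ℕ) :
    coeff m (PhiFun p hp g) = coeff (eMap p m) g := rfl

lemma PhiFun_add (hp : 0 < p) (g h : MvPolynomial (Fin 4) (ZMod p)) :
    PhiFun p hp (g + h) = PhiFun p hp g + PhiFun p hp h := by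
  ext m
  rw [coeff_add, coeff_PhiFun, coeff_PhiFun, coeff_PhiFun, coeff_add]

lemma PhiFun_C_mul (hp : 0 < p) (a : ZMod p) (g : MvPolynomial (Fin 4) (ZMod p)) :
    PhiFun p hp (C a * g) = C a * PhiFun p hp g := by
  ext m
  rw [coeff_C_mul, coeff_PhiFun, coeff_PhiFun, coeff_C_mul]

/-- `PhiFun` bundled as a `ZMod p`-linear map. -/
def Phi (hp : 0 < p) : MvPolynomial (Fin 4) (ZMod p) →ₗ[ZMod p] MvPolynomial (Fin 4) (ZMod p) where
  toFun := PhiFun p hp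
  map_add' := PhiFun_add p hp
  map_smul' a g := by
    simp only [RingHom.id_apply, smul_eq_C_mul, PhiFun_C_mul]

lemma Phi_apply (hp : 0 < p) (g : MvPolynomial (Fin 4) (ZMod p)) :
    Phi p hp g = PhiFun p hp g := rfl

lemma smul_le_eMap_iff (hp : 0 < p) (m n : Fin 4 →₀ ℕ) :
    p • m ≤ eMap p n ↔ m ≤ n := by
  simp only [Finsupp.le_def, Finsupp.smul_apply, smul_eq_mul, eMap_apply]
  constructor
  · intro h i
    by_contra hc
    push_neg at hc
    have h1 : p * (n i + 1) ≤ p * m i := Nat.mul_le_mul_left p hc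
    rw [Nat.mul_add, Nat.mul_one] at h1
    have h2 := le_trans h1 (h i)
    rw [Nat.add_le_add_iff_left] at h2
    omega
  · intro h i
    exact le_trans (Nat.mul_le_mul_left p (h i)) (Nat.le_add_right _ _)

lemma eMap_sub (m n : Fin 4 →₀ ℕ) (hmn : m ≤ n) :
    eMap p n - p • m = eMap p (n - m) := by
  ext i
  rw [Finsupp.tsub_apply, eMap_apply, eMap_apply, Finsupp.smul_apply, smul_eq_mul,
    Finsupp.tsub_apply]
  have key : p * (n i - m i) + p * m i = p * n i := by
    rw [← Nat.mul_add, Nat.sub_add_cancel (hmn i)]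
  rw [← key, Nat.add_right_comm, Nat.add_sub_cancel]

/-- Key semilinearity: `Φ (A^p * g) = A * Φ g`. -/
lemma PhiFun_pow_mul (hp : p.Prime) (A g : MvPolynomial (Fin 4) (ZMod p)) :
    PhiFun p hp.pos (A ^ p * g) = A * PhiFun p hp.pos g := by
  haveI := Fact.mk hp
  induction A using MvPolynomial.induction_on' with
  | monomial m c =>
    rw [monomial_pow, ZMod.pow_card]
    ext n
    rw [coeff_PhiFun, coeff_monomial_mul', coeff_monomial_mul']
    by_cases hmn : m ≤ n
    · rw [if_pos hmn, if_pos ((smul_le_eMap_iff p hp.pos m n).mpr hmn),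
        eMap_sub p m n hmn, coeff_PhiFun]
    · rw [if_neg hmn, if_neg (fun hc => hmn ((smul_le_eMap_iff p hp.pos m n).mp hc))]
  | add A B hA hB =>
    rw [add_pow_char, add_mul, PhiFun_add, hA, hB, ← add_mul]

lemma degree_eq_sum (d : Fin 4 →₀ ℕ) : d.degree = ∑ i : Fin 4, d i :=
  Finset.sum_subset (Finset.subset_univ _)
    (fun i _ hi => Finsupp.notMem_support_iff.mp hi)

lemma prod_univ_X_pow (e : Fin 4 → ℕ) :
    (∏ i : Fin 4, (X i : MvPolynomial (Fin 4) (ZMod p)) ^ e i)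
      = monomial (Finsupp.equivFunOnFinite.symm e) 1 := by
  rw [← prod_X_pow_eq_monomial]
  refine (Finset.prod_subset (Finset.subset_univ _) ?_).symm
  intro i _ hi
  have h0 : Finsupp.equivFunOnFinite.symm e i = 0 := Finsupp.notMem_support_iff.mp hi
  rw [show e i = 0 from h0, pow_zero]

lemma coeff_sum_X_pow_3 (n : ℕ) (k₀ : Fin 4 → ℕ) (hs : ∑ i : Fin 4, k₀ i = n) :
    coeff (Finsupp.equivFunOnFinite.symm fun i => 3 * k₀ i)
      ((∑ i : Fin 4, (X i : MvPolynomial (Fin 4) (ZMod p)) ^ 3) ^ n)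
      = (Nat.multinomial Finset.univ k₀ : ZMod p) := by
  classical
  rw [Finset.sum_pow_eq_sum_piAntidiag, coeff_sum]
  rw [Finset.sum_eq_single k₀]
  · simp_rw [← pow_mul, prod_univ_X_pow]
    rw [← map_natCast (C : ZMod p →+* MvPolynomial (Fin 4) (ZMod p)), coeff_C_mul,
      coeff_monomial, if_pos rfl, mul_one]
  · intro b _ hb
    simp_rw [← pow_mul, prod_univ_X_pow]
    rw [← map_natCast (C : ZMod p →+* MvPolynomial (Fin 4) (ZMod p)), coeff_C_mul,
      coeff_monomial, if_neg, mul_zero]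
    intro he
    exact hb (funext fun i => by
      have := congrArg (fun d => Finsupp.equivFunOnFinite d i) he
      simp only [Finsupp.equivFunOnFinite.apply_symm_apply] at this
      omega)
  · intro hk
    exact absurd (Finset.mem_piAntidiag.mpr ⟨hs, fun i _ => Finset.mem_univ i⟩) hk

lemma multinomial_ne_zero (hp : p.Prime) (k₀ : Fin 4 → ℕ) (hs : ∑ i : Fin 4, k₀ i = p - 1) :
    (Nat.multinomial Finset.univ k₀ : ZMod p) ≠ 0 := by
  haveI := Fact.mk hp
  intro h
  rw [ZMod.natCast_eq_zero_iff] at h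
  have hd : p ∣ (p - 1).factorial := by
    have h2 := h.mul_left (∏ i : Fin 4, (k₀ i).factorial)
    rwa [Nat.multinomial_spec, hs] at h2
  rw [Nat.Prime.dvd_factorial hp] at hd
  have := hp.one_lt
  omega

end

end FermatAux

open FermatAux in
/-- for a prime `p ≥ 5`, the ring `R = 𝔽_p[x,y,z,w]/(x³+y³+z³+w³)` is
`F`-pure (`F`-split): there is an additive map `φ : R → R` with `φ 1 = 1` and
`φ (a^p * b) = a * φ b`, i.e. the Frobenius splits as a map of `R`-modules. -/
theorem fermat_cubic_F_pure (p : ℕ) (hp : p.Prime) (hp5 : 5 ≤ p) :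
    ∃ φ : RFermat p →+ RFermat p,
      φ 1 = 1 ∧ ∀ a b : RFermat p, φ (a ^ p * b) = a * φ b := by
  classical
  haveI := Fact.mk hp
  have hp0 : 0 < p := hp.pos
  set t := (p - 1) / 3 with ht
  set r := (p - 1) % 3 with hr
  have h3 : ¬ (3 ∣ p) := by
    intro h
    have := (Nat.prime_dvd_prime_iff_eq (by norm_num) hp).mp h
    omega
  have hr1 : r ≤ 1 := by omega
  have hsum : 3 * t + r = p - 1 := by omega
  set k₀ : Fin 4 → ℕ := ![t, t, t, r] with hk₀
  have hk0sum : ∑ i : Fin 4, k₀ i = p - 1 := by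
    rw [Fin.sum_univ_four, show k₀ 0 = t from rfl, show k₀ 1 = t from rfl,
      show k₀ 2 = t from rfl, show k₀ 3 = r from rfl]
    omega
  have hk0val : ∀ i : Fin 4, k₀ i = t ∨ k₀ i = r := by
    intro i
    fin_cases i
    · exact Or.inl rfl
    · exact Or.inl rfl
    · exact Or.inl rfl
    · exact Or.inr rfl
  have hk3 : ∀ i, 3 * k₀ i ≤ p - 1 := by
    intro i
    rcases hk0val i with h | h <;> rw [h] <;> omega
  let f : MvPolynomial (Fin 4) (ZMod p) := X 0 ^ 3 + X 1 ^ 3 + X 2 ^ 3 + X 3 ^ 3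
  have hfsum : f = ∑ i : Fin 4, X i ^ 3 := by rw [Fin.sum_univ_four]
  set α : Fin 4 →₀ ℕ := Finsupp.equivFunOnFinite.symm (fun i => 3 * k₀ i) with hα
  set c : ZMod p := (Nat.multinomial Finset.univ k₀ : ZMod p) with hc
  have hc0 : c ≠ 0 := multinomial_ne_zero p hp k₀ hk0sum
  have hαD : α ≤ Dvec p := by
    rw [Finsupp.le_def]
    intro i
    exact hk3 i
  let v : MvPolynomial (Fin 4) (ZMod p) := monomial (Dvec p - α) 1
  have hfh : f.IsHomogeneous 3 := by
    have h := fun i : Fin 4 => isHomogeneous_X_pow (R := ZMod p) i 3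
    exact (((h 0).add (h 1)).add (h 2)).add (h 3)
  have hvdeg : (Dvec p - α).degree = p - 1 := by
    rw [degree_eq_sum, Fin.sum_univ_four]
    have hap : ∀ i, (Dvec p - α) i = (p - 1) - 3 * k₀ i := by
      intro i
      rw [Finsupp.tsub_apply, Dvec_apply]
      rfl
    rw [hap 0, hap 1, hap 2, hap 3]
    have h0 := hk3 0; have h1 := hk3 1; have h2 := hk3 2; have h3' := hk3 3
    have e0 : k₀ 0 = t := rfl
    have e1 : k₀ 1 = t := rfl
    have e2 : k₀ 2 = t := rfl
    have e3 : k₀ 3 = r := rfl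
    rw [e0, e1, e2, e3] at *
    omega
  have hFh : (f ^ (p - 1) * v).IsHomogeneous (3 * (p - 1) + (p - 1)) :=
    (hfh.pow (p - 1)).mul (isHomogeneous_monomial 1 hvdeg)
  have hcoeff : coeff α (f ^ (p - 1)) = c := by
    rw [hfsum]
    exact coeff_sum_X_pow_3 p (p - 1) k₀ hk0sum
  have hPhiU : PhiFun p hp0 (f ^ (p - 1) * v) = C c := by
    ext m
    rw [coeff_PhiFun]
    by_cases hm : m = 0
    · subst hm
      have he0 : eMap p 0 = Dvec p := by
        ext i
        rw [eMap_apply]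
        simp [Dvec_apply]
      rw [he0, coeff_mul_monomial', if_pos tsub_le_self, tsub_tsub_cancel_of_le hαD,
        hcoeff, mul_one, coeff_zero_C]
    · have hm1 : 1 ≤ ∑ i : Fin 4, m i := by
        rcases Nat.eq_zero_or_pos (∑ i : Fin 4, m i) with h0 | h1
        · exact absurd (Finsupp.ext fun i => by
            have := (Finset.sum_eq_zero_iff.mp h0) i (Finset.mem_univ i)
            simpa using this) hm
        · exact h1
      have hdeg : (eMap p m).degree = p * (∑ i : Fin 4, m i) + 4 * (p - 1) := by
        rw [degree_eq_sum]
        simp only [eMap_apply]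
        rw [Finset.sum_add_distrib, ← Finset.mul_sum, Finset.sum_const, Finset.card_univ,
          Fintype.card_fin, smul_eq_mul]
      have hne : (eMap p m).degree ≠ 3 * (p - 1) + (p - 1) := by
        rw [hdeg]
        have h2 : p ≤ p * ∑ i : Fin 4, m i := Nat.le_mul_of_pos_right p (by omega)
        set A := p * ∑ i : Fin 4, m i
        omega
      rw [hFh.coeff_eq_zero hne, coeff_C, if_neg (fun h0 => hm h0.symm)]
  -- the twisting element
  let u : MvPolynomial (Fin 4) (ZMod p) := C c⁻¹ * (f ^ (p - 1) * v)
  let I : Ideal (MvPolynomial (Fin 4) (ZMod p)) := Ideal.span {f}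
  let φ₀ : MvPolynomial (Fin 4) (ZMod p) →ₗ[ZMod p] MvPolynomial (Fin 4) (ZMod p) :=
    (Phi p hp0) ∘ₗ LinearMap.mulLeft (ZMod p) u
  have hφ₀ : ∀ x, φ₀ x = PhiFun p hp0 (u * x) := fun x => rfl
  have hff : f ^ (p - 1) * f = f ^ p := by
    rw [← pow_succ]
    congr 1
    omega
  have hwd : ∀ x ∈ I, φ₀ x ∈ I := by
    intro x hx
    obtain ⟨s, hsx⟩ := Ideal.mem_span_singleton'.mp hx
    have hux : u * x = f ^ p * (C c⁻¹ * v * s) := by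
      rw [← hsx]
      calc u * (s * f) = (f ^ (p - 1) * f) * (C c⁻¹ * v * s) := by ring
        _ = f ^ p * (C c⁻¹ * v * s) := by rw [hff]
    rw [hφ₀, hux, PhiFun_pow_mul p hp]
    exact Ideal.mem_span_singleton'.mpr ⟨PhiFun p hp0 (C c⁻¹ * v * s), mul_comm _ _⟩
  let φf : RFermat p → RFermat p := Quotient.lift (fun g => Ideal.Quotient.mk I (φ₀ g))
    (fun g g' hgg' => by
      have hmm : Ideal.Quotient.mk I g = Ideal.Quotient.mk I g' := Quotient.sound hgg'
      have hd : g - g' ∈ I := Ideal.Quotient.eq.mp hmm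
      have hd2 : φ₀ g - φ₀ g' ∈ I := by rw [← map_sub]; exact hwd _ hd
      exact Ideal.Quotient.eq.mpr hd2)
  have hmkφ : ∀ x, φf (Ideal.Quotient.mk I x) = Ideal.Quotient.mk I (φ₀ x) := fun x => rfl
  have hadd : ∀ a b : RFermat p, φf (a + b) = φf a + φf b := by
    intro a b
    obtain ⟨A, rfl⟩ := Ideal.Quotient.mk_surjective a
    obtain ⟨B, rfl⟩ := Ideal.Quotient.mk_surjective b
    rw [← map_add, hmkφ, hmkφ, hmkφ, map_add, map_add]
  refine ⟨AddMonoidHom.mk' φf hadd, ?_, ?_⟩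
  · have h1 : (1 : RFermat p) = Ideal.Quotient.mk I (1 : MvPolynomial (Fin 4) (ZMod p)) :=
      (map_one _).symm
    show φf 1 = 1
    rw [h1, hmkφ]
    have hphi1 : φ₀ (1 : MvPolynomial (Fin 4) (ZMod p)) = 1 := by
      rw [hφ₀, mul_one]
      show PhiFun p hp0 (C c⁻¹ * (f ^ (p - 1) * v)) = 1
      rw [PhiFun_C_mul, hPhiU, ← C_mul, inv_mul_cancel₀ hc0, C_1]
    rw [hphi1, map_one]
  · intro a b
    obtain ⟨A, rfl⟩ := Ideal.Quotient.mk_surjective a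
    obtain ⟨B, rfl⟩ := Ideal.Quotient.mk_surjective b
    show φf ((Ideal.Quotient.mk I) A ^ p * (Ideal.Quotient.mk I) B)
        = (Ideal.Quotient.mk I) A * φf ((Ideal.Quotient.mk I) B)
    rw [← map_pow, ← map_mul, hmkφ, hmkφ]
    have hstep : φ₀ (A ^ p * B) = A * φ₀ B := by
      rw [hφ₀, hφ₀, show u * (A ^ p * B) = A ^ p * (u * B) by ring, PhiFun_pow_mul p hp]
    rw [hstep, map_mul]
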